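/- Let n ≥ 1 be an integer and let P ∈ ℤ[y_1, ..., y_n] be a polynomial of degree at least one. Then there exist c, C > 0 and ε ∈ (0,1), each depending only on P, such that for any finite commutative ring R with characteristic N satisfying lpf(N) > C, the number of points y = (y_1, ..., y_n) ∈ R^n with P(y) = 0_R is at most |R|^{n−1} + c·|R|^n / lpf(N)^ε. -/

import Mathlib

open scoped BigOperators Classical


lemma sz {F : Type*} [Field F] [Fintype F] :
    ∀ (n : ℕ) (f : MvPolynomial (Fin n) F), f ≠ 0 →
    (Finset.univ.filter fun y : Fin n → F => MvPolynomial.eval y f = 0).card * Fintype.card F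
      ≤ f.totalDegree * Fintype.card F ^ n := by
  intro n
  induction n with
  | zero =>
    intro f hf
    have : (Finset.univ.filter fun y : Fin 0 → F => MvPolynomial.eval y f = 0) = ∅ := by
      rw [Finset.filter_eq_empty_iff]
      intro y _
      intro h
      apply hf
      have hfc := MvPolynomial.eq_C_of_isEmpty f
      have : MvPolynomial.eval y f = MvPolynomial.coeff 0 f := by
        conv_lhs => rw [hfc]
        simp
      rw [hfc, ← this, h, map_zero]
    rw [this]
    simp
  | succ n ih =>
    intro f hf
    set g := MvPolynomial.finSuccEquiv F n f with hg
    have hg0 : g ≠ 0 := by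
      simpa [hg] using (map_ne_zero_iff _ (MvPolynomial.finSuccEquiv F n).injective).mpr hf
    set D := g.natDegree with hD
    set L := g.leadingCoeff with hL
    have hL0 : L ≠ 0 := Polynomial.leadingCoeff_ne_zero.mpr hg0
    have hdeg : L.totalDegree + D ≤ f.totalDegree := by
      have := MvPolynomial.totalDegree_coeff_finSuccEquiv_add_le f D
        (by rw [← Polynomial.leadingCoeff]; exact hL0)
      exact this
    set q := Fintype.card F with hq
    set Z := (Finset.univ.filter fun y : Fin (n+1) → F => MvPolynomial.eval y f = 0) with hZ
    have hsplit : Z.card = ∑ s : Fin n → F, (Z.filter fun y => Fin.tail y = s).card := by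
      apply Finset.card_eq_sum_card_fiberwise
      intro x _
      exact Finset.mem_univ _
    have key : ∀ s : Fin n → F, (Z.filter fun y => Fin.tail y = s).card
        ≤ if MvPolynomial.eval s L = 0 then q else D := by
      intro s
      split
      · -- bound by q via injectivity of y ↦ y 0 on the fiber
        refine le_trans (Finset.card_le_card_of_injOn (fun y => y 0)
          (fun a _ => Finset.mem_univ _) ?_) (le_of_eq (Finset.card_univ))
        intro a ha b hb hab
        simp only [hZ, Finset.mem_coe, Finset.mem_filter] at ha hb
        have h1 : a = Fin.cons (a 0) s := by
          rw [← ha.2]; exact (Fin.cons_self_tail a).symm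
        have h2 : b = Fin.cons (b 0) s := by
          rw [← hb.2]; exact (Fin.cons_self_tail b).symm
        change a 0 = b 0 at hab; rw [h1, h2, hab]
      · rename_i hsL
        set h := Polynomial.map (MvPolynomial.eval s) g with hh
        have hh0 : h ≠ 0 := by
          intro h0
          apply hsL
          have : h.coeff D = MvPolynomial.eval s L := by
            rw [hh, Polynomial.coeff_map, hL, hD, Polynomial.coeff_natDegree]
          rw [← this, h0, Polynomial.coeff_zero]
        calc (Z.filter fun y => Fin.tail y = s).card
            ≤ h.roots.toFinset.card := by
              refine Finset.card_le_card_of_injOn (fun y => y 0) ?_ ?_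
              · intro a ha
                simp only [hZ, Finset.mem_coe, Finset.mem_filter] at ha
                rw [Finset.mem_coe, Multiset.mem_toFinset, Polynomial.mem_roots hh0]
                have := ha.1.2
                have ha2 : a = Fin.cons (a 0) s := by
                  rw [← ha.2]; exact (Fin.cons_self_tail a).symm
                rw [ha2] at this
                rw [MvPolynomial.eval_eq_eval_mv_eval'] at this
                exact this
              · intro a ha b hb hab
                simp only [hZ, Finset.mem_coe, Finset.mem_filter] at ha hb
                have h1 : a = Fin.cons (a 0) s := by
                  rw [← ha.2]; exact (Fin.cons_self_tail a).symm
                have h2 : b = Fin.cons (b 0) s := by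
                  rw [← hb.2]; exact (Fin.cons_self_tail b).symm
                change a 0 = b 0 at hab; rw [h1, h2, hab]
          _ ≤ Multiset.card h.roots := Multiset.toFinset_card_le _
          _ ≤ h.natDegree := Polynomial.card_roots' h
          _ ≤ D := Polynomial.natDegree_map_le
    have hsum : Z.card ≤ L.totalDegree * q ^ n + D * q ^ n := by
      rw [hsplit]
      calc ∑ s : Fin n → F, (Z.filter fun y => Fin.tail y = s).card
          ≤ ∑ s : Fin n → F, (if MvPolynomial.eval s L = 0 then q else D) :=
            Finset.sum_le_sum fun s _ => key s
        _ = (Finset.univ.filter fun s : Fin n → F => MvPolynomial.eval s L = 0).card * q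
            + (Finset.univ.filter fun s : Fin n → F => ¬ MvPolynomial.eval s L = 0).card * D := by
            rw [Finset.sum_ite, Finset.sum_const, Finset.sum_const, smul_eq_mul, smul_eq_mul]
        _ ≤ L.totalDegree * q ^ n + q ^ n * D := by
            apply Nat.add_le_add
            · exact ih L hL0
            · apply Nat.mul_le_mul_right
              calc (Finset.univ.filter fun s : Fin n → F => ¬ MvPolynomial.eval s L = 0).card
                  ≤ (Finset.univ : Finset (Fin n → F)).card := Finset.card_filter_le _ _
                _ = q ^ n := by simp [hq, Finset.card_univ]
        _ = L.totalDegree * q ^ n + D * q ^ n := by ring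
    calc Z.card * q ≤ (L.totalDegree * q ^ n + D * q ^ n) * q := Nat.mul_le_mul_right _ hsum
      _ = (L.totalDegree + D) * q ^ (n + 1) := by ring
      _ ≤ f.totalDegree * q ^ (n + 1) := Nat.mul_le_mul_right _ hdeg


lemma fiber_card {R S : Type*} [CommRing R] [Fintype R] [CommRing S] [Fintype S]
    (φ : R →+* S) (hφ : Function.Surjective φ) (c : S) :
    Fintype.card {x : R // φ x = c} = Fintype.card {x : R // φ x = 0} := by
  obtain ⟨x0, hx0⟩ := hφ c
  apply Fintype.card_congr
  refine ⟨fun u => ⟨u.1 - x0, by simp [map_sub, u.2, hx0]⟩,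
    fun u => ⟨u.1 + x0, by simp [map_add, u.2, hx0]⟩, ?_, ?_⟩
  · intro u; ext; simp
  · intro u; ext; simp

/-- counting lemma over a quotient -/
lemma card_R_eq {R S : Type*} [CommRing R] [Fintype R] [CommRing S] [Fintype S]
    (φ : R →+* S) (hφ : Function.Surjective φ) :
    Fintype.card R = Fintype.card S * Fintype.card {x : R // φ x = 0} := by
  rw [← Fintype.card_congr (Equiv.sigmaFiberEquiv (φ : R → S)), Fintype.card_sigma]
  simp_rw [fiber_card φ hφ]
  simp [Finset.sum_const, Finset.card_univ, mul_comm]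

lemma tdeg_map_le {σ : Type*} {S T : Type*} [CommSemiring S] [CommSemiring T]
    (f : S →+* T) (P : MvPolynomial σ S) :
    (MvPolynomial.map f P).totalDegree ≤ P.totalDegree := by
  show (MvPolynomial.map f P).support.sup (fun s => s.sum fun _ e => e)
      ≤ P.support.sup (fun s => s.sum fun _ e => e)
  exact Finset.sup_mono (MvPolynomial.support_map_subset f P)

lemma key_count {R k : Type*} [CommRing R] [Fintype R] [Field k] [Fintype k]
    (φ : R →+* k) (hφ : Function.Surjective φ) {n : ℕ} (P : MvPolynomial (Fin n) ℤ) (d : ℕ)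
    (hP : MvPolynomial.map (Int.castRingHom k) P ≠ 0)
    (hdeg : (MvPolynomial.map (Int.castRingHom k) P).totalDegree ≤ d) :
    (Finset.univ.filter fun y : Fin n → R => MvPolynomial.aeval y P = 0).card * Fintype.card k
      ≤ d * (Fintype.card R) ^ n := by
  classical
  set P' := MvPolynomial.map (Int.castRingHom k) P with hP'
  set q := Fintype.card k with hq
  set ZR := (Finset.univ.filter fun y : Fin n → R => MvPolynomial.aeval y P = 0) with hZR
  set Zk := (Finset.univ.filter fun z : Fin n → k => MvPolynomial.eval z P' = 0) with hZk
  set Φ : (Fin n → R) → (Fin n → k) := fun y i => φ (y i) with hΦ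
  have hmap : ∀ y : Fin n → R, MvPolynomial.aeval y P = 0 →
      MvPolynomial.eval (Φ y) P' = 0 := by
    intro y hy
    have h1 : MvPolynomial.aeval y P = MvPolynomial.eval₂ (Int.castRingHom R) y P := by
      rw [MvPolynomial.aeval_def]; rfl
    have h2 : φ (MvPolynomial.eval₂ (Int.castRingHom R) y P)
        = MvPolynomial.eval₂ (Int.castRingHom k) (Φ y) P := by
      rw [MvPolynomial.eval₂_comp_left φ]
      congr 1
      ext x : 1
      simp
    rw [hP', MvPolynomial.eval_map, ← h2, ← h1, hy, map_zero]
  set K := Fintype.card {x : R // φ x = 0} with hK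
  have hfiber : ∀ z : Fin n → k,
      (Finset.univ.filter fun y : Fin n → R => Φ y = z).card = K ^ n := by
    intro z
    rw [← Fintype.card_subtype]
    have e1 : {y : Fin n → R // Φ y = z} ≃ ∀ i : Fin n, {x : R // φ x = z i} := by
      refine Equiv.trans (Equiv.subtypeEquivRight ?_) (Equiv.subtypePiEquivPi)
      intro y
      constructor
      · intro h i; exact congrFun h i
      · intro h; funext i; exact h i
    rw [Fintype.card_congr e1, Fintype.card_pi]
    simp_rw [fiber_card φ hφ]
    simp [hK]
  have hcardR : Fintype.card R = q * K := card_R_eq φ hφ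
  have hZRk : ZR.card ≤ Zk.card * K ^ n := by
    have h1 : ZR.card = ∑ z ∈ Zk, (ZR.filter fun y => Φ y = z).card := by
      apply Finset.card_eq_sum_card_fiberwise
      intro y hy
      rw [hZk, Finset.mem_coe, Finset.mem_filter]
      rw [hZR, Finset.mem_coe, Finset.mem_filter] at hy
      exact ⟨Finset.mem_univ _, hmap y hy.2⟩
    rw [h1]
    calc ∑ z ∈ Zk, (ZR.filter fun y => Φ y = z).card
        ≤ ∑ z ∈ Zk, K ^ n := by
          apply Finset.sum_le_sum
          intro z _
          rw [← hfiber z]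
          exact Finset.card_le_card (Finset.filter_subset_filter _ (Finset.filter_subset _ _))
      _ = Zk.card * K ^ n := by rw [Finset.sum_const, smul_eq_mul]
  have hZkq : Zk.card * q ≤ d * q ^ n := le_trans (sz n P' hP)
    (Nat.mul_le_mul_right _ hdeg)
  calc ZR.card * q ≤ (Zk.card * K ^ n) * q := Nat.mul_le_mul_right _ hZRk
    _ = (Zk.card * q) * K ^ n := by ring
    _ ≤ (d * q ^ n) * K ^ n := Nat.mul_le_mul_right _ hZkq
    _ = d * (q * K) ^ n := by rw [mul_pow]; ring
    _ = d * (Fintype.card R) ^ n := by rw [hcardR]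

set_option maxHeartbeats 1000000 in
/-- **Proposition (bound on the number of roots of an integer polynomial over a finite
commutative ring).** Let `P ∈ ℤ[y₁, …, yₙ]` have degree at least one. There exist `c, C > 0`
and `ε ∈ (0,1)`, depending only on `P`, such that for every finite commutative ring `R` of
characteristic `N` with `lpf(N) > C`, the number of `y ∈ Rⁿ` with `P(y) = 0` is at most
`|R|^{n−1} + c·|R|ⁿ/lpf(N)^ε`. -/
theorem bound_on_number_of_roots
    (n : ℕ) (hn : 1 ≤ n) (P : MvPolynomial (Fin n) ℤ) (hdeg : 1 ≤ P.totalDegree) :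
    ∃ c C ε : ℝ, 0 < c ∧ 0 < C ∧ ε ∈ Set.Ioo (0 : ℝ) 1 ∧
      ∀ (R : Type*) [CommRing R] [Fintype R] [Nontrivial R],
        C < (Nat.minFac (ringChar R) : ℝ) →
        ((Finset.univ.filter fun y : Fin n → R => MvPolynomial.aeval y P = 0).card : ℝ)
          ≤ (Fintype.card R : ℝ) ^ (n - 1) +
            c * (Fintype.card R : ℝ) ^ n / (Nat.minFac (ringChar R) : ℝ) ^ ε := by
  classical
  have hP0 : P ≠ 0 := by
    intro h; rw [h] at hdeg; simp [MvPolynomial.totalDegree_zero] at hdeg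
  set d := P.totalDegree with hd
  obtain ⟨s, hs⟩ := MvPolynomial.ne_zero_iff.mp hP0
  set a := P.coeff s with ha
  refine ⟨d, (max d a.natAbs : ℕ), 1/2, by exact_mod_cast hdeg, ?_, ⟨by norm_num, by norm_num⟩, ?_⟩
  · have : 1 ≤ max d a.natAbs := le_trans hdeg (le_max_left _ _)
    exact_mod_cast this
  intro R _ _ _ hC
  set p := Nat.minFac (ringChar R) with hp
  have hCa : (a.natAbs : ℝ) < p := lt_of_le_of_lt (by exact_mod_cast le_max_right d a.natAbs) hC
  have hap : a.natAbs < p := by exact_mod_cast hCa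
  -- the quotient field
  obtain ⟨m, hm⟩ := Ideal.exists_maximal R
  haveI := hm
  letI kF : Field (R ⧸ m) := Ideal.Quotient.field m
  letI : Fintype (R ⧸ m) := Fintype.ofFinite _
  set φ : R →+* R ⧸ m := Ideal.Quotient.mk m with hφdef
  have hφ : Function.Surjective φ := Ideal.Quotient.mk_surjective
  set q := Fintype.card (R ⧸ m) with hq
  -- characteristic facts
  set p' := ringChar (R ⧸ m) with hp'
  have hp'prime : p'.Prime := CharP.char_is_prime (R ⧸ m) p'
  have hdvd : p' ∣ ringChar R := by
    apply ringChar.dvd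
    have h0 : ((ringChar R : ℕ) : R) = 0 := ringChar.Nat.cast_ringChar
    calc ((ringChar R : ℕ) : R ⧸ m) = φ ((ringChar R : ℕ) : R) := by push_cast; rfl
      _ = 0 := by rw [h0, map_zero]
  have hple : p ≤ p' := Nat.minFac_le_of_dvd hp'prime.two_le hdvd
  have hp'q : p' ≤ q := by
    haveI : CharP (R ⧸ m) p' := ringChar.charP (R ⧸ m)
    obtain ⟨r, hr⟩ := FiniteField.card (R ⧸ m) p'
    rw [hq, hr.2]
    exact Nat.le_self_pow (by exact_mod_cast r.2.ne') p'
  -- image polynomial is nonzero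
  have hP'0 : MvPolynomial.map (Int.castRingHom (R ⧸ m)) P ≠ 0 := by
    intro h0
    have hcoeff : (MvPolynomial.map (Int.castRingHom (R ⧸ m)) P).coeff s = (a : R ⧸ m) := by
      rw [MvPolynomial.coeff_map]; rfl
    have hzz : (a : R ⧸ m) = 0 := by rw [← hcoeff, h0, MvPolynomial.coeff_zero]
    haveI : CharP (R ⧸ m) p' := ringChar.charP (R ⧸ m)
    rw [CharP.intCast_eq_zero_iff (R ⧸ m) p'] at hzz
    have h2 : p' ∣ a.natAbs := Int.natCast_dvd.mp hzz
    have h3 : p' ≤ a.natAbs := Nat.le_of_dvd (Int.natAbs_pos.mpr hs) h2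
    omega
  have hP'deg : (MvPolynomial.map (Int.castRingHom (R ⧸ m)) P).totalDegree ≤ d :=
    tdeg_map_le _ P
  have hmain := key_count φ hφ P d hP'0 hP'deg
  -- pass to the reals
  have hq0 : 0 < q := Fintype.card_pos
  have hp0 : (0:ℝ) < p := by
    have h1 : 0 < max d a.natAbs := lt_of_lt_of_le hdeg (le_max_left _ _)
    calc (0:ℝ) < ((max d a.natAbs : ℕ) : ℝ) := by exact_mod_cast h1
      _ < p := hC
  have hp1 : (1:ℝ) ≤ p := by
    have h1 : 1 ≤ max d a.natAbs := le_trans hdeg (le_max_left _ _)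
    calc (1:ℝ) ≤ ((max d a.natAbs : ℕ) : ℝ) := by exact_mod_cast h1
      _ ≤ p := le_of_lt hC
  have hpq : (p:ℝ) ≤ q := by exact_mod_cast le_trans hple hp'q
  have hstep1 : (((Finset.univ.filter
      fun y : Fin n → R => MvPolynomial.aeval y P = 0).card : ℕ) : ℝ)
      ≤ (d : ℝ) * (Fintype.card R : ℝ) ^ n / q := by
    rw [le_div_iff₀ (by exact_mod_cast hq0)]
    exact_mod_cast hmain
  have hrpow : ((p:ℝ)) ^ ((1:ℝ)/2) ≤ (p:ℝ) := by
    calc ((p:ℝ)) ^ ((1:ℝ)/2) ≤ ((p:ℝ)) ^ ((1:ℝ)) :=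
          Real.rpow_le_rpow_of_exponent_le hp1 (by norm_num)
      _ = p := Real.rpow_one p
  have hnum : (0:ℝ) ≤ (d : ℝ) * (Fintype.card R : ℝ) ^ n := by positivity
  have hstep2 : (d : ℝ) * (Fintype.card R : ℝ) ^ n / q
      ≤ (d : ℝ) * (Fintype.card R : ℝ) ^ n / (p:ℝ) ^ ((1:ℝ)/2) := by
    apply div_le_div_of_nonneg_left hnum
    · exact Real.rpow_pos_of_pos hp0 _
    · exact le_trans hrpow hpq
  calc (((Finset.univ.filter
      fun y : Fin n → R => MvPolynomial.aeval y P = 0).card : ℕ) : ℝ)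
      ≤ (d : ℝ) * (Fintype.card R : ℝ) ^ n / q := hstep1
    _ ≤ (d : ℝ) * (Fintype.card R : ℝ) ^ n / (p:ℝ) ^ ((1:ℝ)/2) := hstep2
    _ ≤ (Fintype.card R : ℝ) ^ (n-1) + (d : ℝ) * (Fintype.card R : ℝ) ^ n / (p:ℝ) ^ ((1:ℝ)/2) := by
        apply le_add_of_nonneg_left
        positivity
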